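/- For every real number x and every λ > 0, the integral over r from 0 to ∞ of the Gaussian density p(r, x, λr) = (1/√(2πr))·exp(−(x−λr)²/(2r)) equals exp(−λ(|x|−x))/λ. -/

import Mathlib

open MeasureTheory Real

/-- Gaussian density with variance `t` and mean `m`, evaluated at `x`. -/
noncomputable def gaussDensity (t x m : ℝ) : ℝ :=
  Real.exp (-(x - m) ^ 2 / (2 * t)) / Real.sqrt (2 * Real.pi * t)

open Set


lemma integral_inv_sub {c : ℝ} (hc : 0 < c) (g : ℝ → ℝ) :
    ∫ t in Ioi (0:ℝ), g t = ∫ t in Ioi (0:ℝ), (c / t ^ 2) * g (c / t) := by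
  have himg : (fun t : ℝ => c / t) '' Ioi 0 = Ioi 0 := by
    ext y
    constructor
    · rintro ⟨t, ht, rfl⟩
      exact div_pos hc ht
    · intro hy
      exact ⟨c / y, div_pos hc hy, by field_simp⟩
  have hderiv : ∀ t ∈ Ioi (0:ℝ), HasDerivWithinAt (fun t : ℝ => c / t) (-(c / t ^ 2)) (Ioi 0) t := by
    intro t ht
    have : HasDerivAt (fun t : ℝ => c / t) (-(c / t ^ 2)) t := by
      simpa [div_eq_mul_inv, mul_comm] using ((hasDerivAt_inv (ne_of_gt ht)).const_mul c)
    exact this.hasDerivWithinAt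
  have hinj : InjOn (fun t : ℝ => c / t) (Ioi 0) := by
    intro t1 h1 t2 h2 he
    field_simp at he
    simpa using he
  have := integral_image_eq_integral_abs_deriv_smul measurableSet_Ioi hderiv hinj g
  rw [himg] at this
  rw [this]
  refine setIntegral_congr_fun measurableSet_Ioi fun t ht => ?_
  have : |(-(c / t ^ 2))| = c / t ^ 2 := by
    rw [abs_neg, abs_of_nonneg]; positivity
  simp [this, smul_eq_mul]

lemma J_int {a b : ℝ} (ha : 0 ≤ a) (hb : 0 < b) :
    IntegrableOn (fun t : ℝ => exp (-(b * t ^ 2 + a / t ^ 2))) (Ioi 0) := by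
  have hmeas : AEStronglyMeasurable (fun t : ℝ => exp (-(b * t ^ 2 + a / t ^ 2)))
      (volume.restrict (Ioi 0)) := by
    refine ContinuousOn.aestronglyMeasurable ?_ measurableSet_Ioi
    refine Real.continuous_exp.comp_continuousOn ?_
    refine ContinuousOn.neg (ContinuousOn.add (by fun_prop) ?_)
    exact ContinuousOn.div continuousOn_const (by fun_prop) fun t ht => pow_ne_zero 2 (ne_of_gt ht)
  refine Integrable.mono' ((integrable_exp_neg_mul_sq hb).restrict (s := Ioi 0)) hmeas ?_
  refine (ae_restrict_iff' measurableSet_Ioi).2 (Filter.Eventually.of_forall fun t ht => ?_)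
  rw [Real.norm_eq_abs, abs_of_pos (exp_pos _)]
  apply exp_le_exp.2
  have : 0 ≤ a / t ^ 2 := by positivity
  linarith

lemma K_int {a b : ℝ} (ha : 0 < a) (hb : 0 < b) :
    IntegrableOn (fun t : ℝ => Real.sqrt a / t ^ 2 * exp (-(b * t ^ 2 + a / t ^ 2))) (Ioi 0) := by
  have hsa : (0:ℝ) < Real.sqrt a := Real.sqrt_pos.2 ha
  have hmeas : AEStronglyMeasurable
      (fun t : ℝ => Real.sqrt a / t ^ 2 * exp (-(b * t ^ 2 + a / t ^ 2)))
      (volume.restrict (Ioi 0)) := by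
    refine ContinuousOn.aestronglyMeasurable ?_ measurableSet_Ioi
    refine ContinuousOn.mul (ContinuousOn.div continuousOn_const (by fun_prop)
      fun t ht => pow_ne_zero 2 (ne_of_gt ht)) ?_
    refine Real.continuous_exp.comp_continuousOn ?_
    refine ContinuousOn.neg (ContinuousOn.add (by fun_prop) ?_)
    exact ContinuousOn.div continuousOn_const (by fun_prop) fun t ht => pow_ne_zero 2 (ne_of_gt ht)
  refine Integrable.mono'
    (((integrable_exp_neg_mul_sq hb).const_mul (Real.sqrt a / a)).restrict (s := Ioi 0)) hmeas ?_
  refine (ae_restrict_iff' measurableSet_Ioi).2 (Filter.Eventually.of_forall fun t ht => ?_)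
  have ht : (0:ℝ) < t := ht
  rw [Real.norm_eq_abs, abs_of_pos (by positivity)]
  -- need : sa/t² * exp(-(bt²+a/t²)) ≤ sa/a * exp(-b t²)
  rw [show -(b * t ^ 2 + a / t ^ 2) = -(b * t ^ 2) + -(a / t ^ 2) by ring, Real.exp_add]
  rw [show Real.sqrt a / t ^ 2 * (exp (-(b * t ^ 2)) * exp (-(a / t ^ 2)))
      = (Real.sqrt a / t ^ 2 * exp (-(a / t ^ 2))) * exp (-(b * t ^ 2)) by ring]
  rw [show Real.sqrt a / a * exp (-b * t ^ 2) = Real.sqrt a / a * exp (-(b * t ^ 2)) by ring_nf]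
  refine mul_le_mul_of_nonneg_right ?_ (le_of_lt (exp_pos _))
  -- sa * u * exp (-(a*u)) ≤ sa / a where u = 1/t²
  rw [div_mul_eq_mul_div, div_le_div_iff₀ (by positivity) ha]
  -- sa * exp(-(a/t²)) * a ≤ sa * t²  ⟺  a * exp(-(a/t²)) ≤ t²
  have key : a / t ^ 2 ≤ exp (a / t ^ 2) := by
    have := Real.add_one_le_exp (a / t ^ 2)
    linarith
  have h2 : a * exp (-(a / t ^ 2)) ≤ t ^ 2 := by
    rw [Real.exp_neg]
    rw [mul_inv_le_iff₀ (exp_pos _)]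
    calc a = (a / t ^ 2) * t ^ 2 := by field_simp
    _ ≤ exp (a / t ^ 2) * t ^ 2 := by nlinarith
    _ ≤ t ^ 2 * exp (a / t ^ 2) := by ring_nf; rfl
  nlinarith [hsa.le, h2]

lemma J_eq {a b : ℝ} (ha : 0 ≤ a) (hb : 0 < b) :
    ∫ t in Ioi (0:ℝ), exp (-(b * t ^ 2 + a / t ^ 2)) =
      Real.sqrt π / (2 * Real.sqrt b) * exp (-(2 * Real.sqrt (a * b))) := by
  rcases eq_or_lt_of_le ha with rfl | ha
  · simp only [zero_div, add_zero, zero_mul, Real.sqrt_zero, mul_zero, neg_zero, Real.exp_zero,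
      mul_one]
    simp only [show ∀ t : ℝ, -(b * t ^ 2) = -b * t ^ 2 from fun t => by ring]
    rw [integral_gaussian_Ioi, Real.sqrt_div Real.pi_pos.le]
    ring
  · set sa := Real.sqrt a with hsa_def
    set sb := Real.sqrt b with hsb_def
    have hsa : 0 < sa := Real.sqrt_pos.2 ha
    have hsb : 0 < sb := Real.sqrt_pos.2 hb
    have hsa2 : sa ^ 2 = a := Real.sq_sqrt ha.le
    have hsb2 : sb ^ 2 = b := Real.sq_sqrt hb.le
    set J := ∫ t in Ioi (0:ℝ), exp (-(b * t ^ 2 + a / t ^ 2)) with hJ_def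
    -- Step 1: the "K" integral equals sb * J
    have hK : ∫ t in Ioi (0:ℝ), sa / t ^ 2 * exp (-(b * t ^ 2 + a / t ^ 2)) = sb * J := by
      have hc : (0:ℝ) < sa / sb := div_pos hsa hsb
      have h1 := integral_inv_sub hc (fun t => exp (-(b * t ^ 2 + a / t ^ 2)))
      rw [hJ_def, h1, ← integral_const_mul]
      refine setIntegral_congr_fun measurableSet_Ioi fun t ht => ?_
      have ht : (0:ℝ) < t := ht
      have h2 : b * (sa / sb / t) ^ 2 + a / (sa / sb / t) ^ 2 = b * t ^ 2 + a / t ^ 2 := by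
        rw [← hsa2, ← hsb2]
        field_simp
        ring
      rw [h2]
      field_simp
    -- Step 2: the substitution u = sb*t - sa/t
    set f : ℝ → ℝ := fun t => sb * t - sa / t with hf_def
    have hderiv : ∀ t ∈ Ioi (0:ℝ),
        HasDerivWithinAt f (sb + sa / t ^ 2) (Ioi 0) t := by
      intro t ht
      have ht : (0:ℝ) < t := ht
      have h1 : HasDerivAt f (sb * 1 - sa * (-(t ^ 2)⁻¹)) t := by
        simpa [hf_def, div_eq_mul_inv] using
          ((hasDerivAt_id t).const_mul sb).fun_sub ((hasDerivAt_inv ht.ne').const_mul sa)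
      have : sb * 1 - sa * (-(t ^ 2)⁻¹) = sb + sa / t ^ 2 := by
        field_simp
        ring
      rw [this] at h1
      exact h1.hasDerivWithinAt
    have hmono : StrictMonoOn f (Ioi 0) := by
      intro t1 h1 t2 h2 h12
      have h1 : (0:ℝ) < t1 := h1
      have h2 : (0:ℝ) < t2 := h2
      have e1 : sa / t2 < sa / t1 := div_lt_div_of_pos_left hsa h1 h12
      have e2 : sb * t1 < sb * t2 := by nlinarith
      simp only [hf_def]
      linarith
    have hinj : InjOn f (Ioi 0) := hmono.injOn
    have himg : f '' Ioi 0 = univ := by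
      refine eq_univ_of_forall fun y => ?_
      set D := Real.sqrt (y ^ 2 + 4 * sa * sb) with hD_def
      have hD2 : D ^ 2 = y ^ 2 + 4 * sa * sb := Real.sq_sqrt (by positivity)
      have hDy : |y| < D := by
        rw [← Real.sqrt_sq_eq_abs]
        exact Real.sqrt_lt_sqrt (sq_nonneg y) (by nlinarith)
      have ht0 : (0:ℝ) < (y + D) / (2 * sb) := by
        have : -y ≤ |y| := neg_le_abs y
        have : 0 < y + D := by linarith
        positivity
      refine ⟨(y + D) / (2 * sb), ht0, ?_⟩
      simp only [hf_def]
      have hyD : (0:ℝ) < y + D := by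
        have := neg_le_abs y
        linarith
      field_simp
      linear_combination hD2
    have key := integral_image_eq_integral_abs_deriv_smul measurableSet_Ioi hderiv hinj
      (fun u => exp (-(u ^ 2 + 2 * Real.sqrt (a * b))))
    rw [himg] at key
    -- LHS of key
    have hLHS : ∫ u in (univ : Set ℝ), exp (-(u ^ 2 + 2 * Real.sqrt (a * b)))
        = Real.sqrt π * exp (-(2 * Real.sqrt (a * b))) := by
      rw [Measure.restrict_univ]
      have : ∀ u : ℝ, exp (-(u ^ 2 + 2 * Real.sqrt (a * b)))
          = exp (-(2 * Real.sqrt (a * b))) * exp (-1 * u ^ 2) := fun u => by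
        rw [← Real.exp_add]; ring_nf
      simp_rw [this]
      rw [integral_const_mul, integral_gaussian]
      rw [show π / 1 = π by ring]
      ring
    -- RHS of key
    have hRHS : ∫ t in Ioi (0:ℝ), |sb + sa / t ^ 2| • exp (-(f t ^ 2 + 2 * Real.sqrt (a * b)))
        = 2 * sb * J := by
      have hab : Real.sqrt (a * b) = sa * sb := Real.sqrt_mul ha.le b
      have hpt : ∀ t ∈ Ioi (0:ℝ), |sb + sa / t ^ 2| • exp (-(f t ^ 2 + 2 * Real.sqrt (a * b)))
          = sb * exp (-(b * t ^ 2 + a / t ^ 2)) + sa / t ^ 2 * exp (-(b * t ^ 2 + a / t ^ 2)) := by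
        intro t ht
        have ht : (0:ℝ) < t := ht
        have habs : |sb + sa / t ^ 2| = sb + sa / t ^ 2 := abs_of_pos (by positivity)
        have hexp : f t ^ 2 + 2 * Real.sqrt (a * b) = b * t ^ 2 + a / t ^ 2 := by
          simp only [hf_def, hab]
          field_simp
          linear_combination t ^ 2 * t ^ 2 * hsb2 + hsa2
        rw [habs, hexp, smul_eq_mul]
        ring
      rw [setIntegral_congr_fun measurableSet_Ioi hpt]
      rw [integral_add ((J_int ha.le hb).const_mul sb) (K_int ha hb)]
      rw [integral_const_mul, hK]
      ring
    have : Real.sqrt π * exp (-(2 * Real.sqrt (a * b))) = 2 * sb * J := by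
      rw [← hLHS, ← hRHS]; exact key
    rw [eq_comm, mul_comm (Real.sqrt π)] at this
    field_simp at this ⊢
    linarith [this]


theorem stmt_0 (x lam : ℝ) (hlam : 0 < lam) :
    ∫ r in Set.Ioi (0 : ℝ), gaussDensity r x (lam * r) =
      Real.exp (-lam * (|x| - x)) / lam := by
  have hsub := integral_comp_rpow_Ioi_of_pos
    (g := fun r => gaussDensity r x (lam * r)) (p := 2) two_pos
  rw [← hsub]
  have hpt : ∀ t ∈ Ioi (0:ℝ),
      ((2:ℝ) * t ^ ((2:ℝ) - 1)) • gaussDensity (t ^ (2:ℝ)) x (lam * t ^ (2:ℝ))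
      = (2 * Real.exp (lam * x) / Real.sqrt (2 * π)) *
        Real.exp (-(lam ^ 2 / 2 * t ^ 2 + x ^ 2 / 2 / t ^ 2)) := by
    intro t ht
    have ht : (0:ℝ) < t := ht
    have h1 : t ^ ((2:ℝ)) = t ^ 2 := by
      rw [show (2:ℝ) = ((2:ℕ):ℝ) by norm_num, Real.rpow_natCast]
    have h0 : t ^ ((2:ℝ) - 1) = t := by
      rw [show (2:ℝ) - 1 = 1 by norm_num, Real.rpow_one]
    rw [h1, h0, smul_eq_mul]
    simp only [gaussDensity]
    have hsq : Real.sqrt (2 * π * t ^ 2) = Real.sqrt (2 * π) * t := by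
      rw [Real.sqrt_mul (by positivity), Real.sqrt_sq ht.le]
    have hexp : -(x - lam * t ^ 2) ^ 2 / (2 * t ^ 2)
        = lam * x + -(lam ^ 2 / 2 * t ^ 2 + x ^ 2 / 2 / t ^ 2) := by
      field_simp
      ring
    rw [hsq, hexp, Real.exp_add]
    have h2π : (0:ℝ) < Real.sqrt (2 * π) := Real.sqrt_pos.2 (by positivity)
    field_simp
  rw [setIntegral_congr_fun measurableSet_Ioi hpt, integral_const_mul,
    J_eq (by positivity : (0:ℝ) ≤ x ^ 2 / 2) (by positivity : (0:ℝ) < lam ^ 2 / 2)]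
  have e1 : Real.sqrt (lam ^ 2 / 2) = lam / Real.sqrt 2 := by
    rw [Real.sqrt_div (sq_nonneg lam), Real.sqrt_sq hlam.le]
  have e2 : Real.sqrt (x ^ 2 / 2 * (lam ^ 2 / 2)) = |x| * lam / 2 := by
    rw [show x ^ 2 / 2 * (lam ^ 2 / 2) = (x * lam / 2) ^ 2 by ring, Real.sqrt_sq_eq_abs,
      abs_div, abs_mul, abs_of_pos hlam, abs_of_pos (by norm_num : (0:ℝ) < 2)]
  have e3 : Real.sqrt (2 * π) = Real.sqrt 2 * Real.sqrt π := Real.sqrt_mul (by norm_num) π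
  rw [e1, e2, e3]
  have h2 : (0:ℝ) < Real.sqrt 2 := Real.sqrt_pos.2 (by norm_num)
  have hπ : (0:ℝ) < Real.sqrt π := Real.sqrt_pos.2 Real.pi_pos
  rw [show -lam * (|x| - x) = lam * x + -(2 * (|x| * lam / 2)) by ring, Real.exp_add]
  field_simp
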